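/- Let L be a Lie algebra over a field F of characteristic different from 3. If L is a CB-algebra, then L³ = 0, i.e., ⁅x,⁅y,z⁆⁆ = 0 for all x, y, z ∈ L (so L is nilpotent of class at most 2). -/
import Mathlib


/-- A Lie algebra over a field of characteristic different from 3 which is a
CB-algebra satisfies `L³ = 0`, i.e. `⁅x,⁅y,z⁆⁆ = 0` for all `x, y, z` (so it
is nilpotent of class at most 2). -/
theorem stmt_11 (F : Type*) [Field F] (h3 : (3 : F) ≠ 0)
    (L : Type*) [LieRing L] [LieAlgebra F L]
    (hcb : ∀ x y : L, ⁅x, y⁆ = 0 → ∀ z : L, ⁅⁅x, z⁆, y⁆ = 0) :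
    ∀ x y z : L, ⁅x, ⁅y, z⁆⁆ = 0 := by
  -- 2-Engel identity
  have engel : ∀ a b : L, ⁅⁅a, b⁆, a⁆ = 0 := fun a b => hcb a a (lie_self a) b
  -- linearized 2-Engel
  have lin : ∀ a b c : L, ⁅⁅b, c⁆, a⁆ = -⁅⁅a, c⁆, b⁆ := by
    intro a b c
    have h : ⁅⁅a + b, c⁆, a + b⁆ = 0 := engel (a + b) c
    rw [add_lie, add_lie, lie_add, lie_add, engel, engel, zero_add, add_zero] at h
    exact eq_neg_of_add_eq_zero_right (by rw [← h])
  -- key identity: ⁅⁅a,b⁆,c⁆ = 2 ⁅⁅a,c⁆,b⁆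
  have key : ∀ a b c : L, ⁅⁅a, b⁆, c⁆ = ⁅⁅a, c⁆, b⁆ + ⁅⁅a, c⁆, b⁆ := by
    intro a b c
    have hj : ⁅⁅a, b⁆, c⁆ = ⁅a, ⁅b, c⁆⁆ - ⁅b, ⁅a, c⁆⁆ := lie_lie a b c
    rw [hj, ← lie_skew a ⁅b, c⁆, lin a b c, ← lie_skew b ⁅a, c⁆, lin b a c]
    abel
  -- hence 3 ⁅⁅a,b⁆,c⁆ = 0, so all triple brackets vanish
  have triple : ∀ a b c : L, ⁅⁅a, b⁆, c⁆ = 0 := by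
    intro a b c
    set w := ⁅⁅a, b⁆, c⁆ with hw
    set u := ⁅⁅a, c⁆, b⁆ with hu
    have h1 : w = u + u := key a b c
    have h2 : u = w + w := key a c b
    have hsum : w + w + w = 0 := by
      have h4 : w + w + (w + w) = w := by rw [← h2, ← h1]
      calc w + w + w = (w + w + (w + w)) - w := by abel
        _ = 0 := by rw [h4]; abel
    have h5 : (3 : F) • w = 0 := by
      rw [show (3 : F) = 1 + 1 + 1 by norm_num, add_smul, add_smul, one_smul]
      exact hsum
    rcases smul_eq_zero.mp h5 with h | h
    · exact absurd h h3
    · exact h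
  intro x y z
  rw [← lie_skew x ⁅y, z⁆, triple y z x, neg_zero]
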